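/- Let μ = (μ₁,…,μ_s) be a partition with s ≥ 2, let 2 ≤ i ≤ s with μ_{i-1} > μ_i, and let μ↑_i denote μ with its i-th part increased by 1. Then f(μ↑_i) − f(μ) = (2μ_i + s − i + 1) f(μ↑_i − 1̂) − (2μ_i + s − i) f(μ − 1̂). -/

import Mathlib

/-- The odd double factorial `(2k-1)!! = 1 * 3 * ... * (2k-1)`, with `odf 0 = 1`. -/
def odf (k : Nat) : Int := ∏ j ∈ Finset.Icc 1 k, (2 * (j : Int) - 1)

/-- Subtract `k` from every part, deleting parts that become zero. -/
def subHat (k : Nat) (l : List Nat) : List Nat :=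
  (l.map (fun x => x - k)).filter (fun x => x ≠ 0)

/-- `l` is a partition: a non-increasing list of positive integers. -/
def IsPartition (l : List Nat) : Prop := l.Chain' (· ≥ ·) ∧ ∀ x ∈ l, 0 < x

/-- Increase the `i`-th part (1-based indexing). -/
def upAt (i : Nat) (l : List Nat) : List Nat := l.set (i - 1) (l.getD (i - 1) 0 + 1)

/-- Decrease the `j`-th part (1-based indexing), deleting it if it becomes zero. -/
def downAt (j : Nat) (l : List Nat) : List Nat :=
  (l.set (j - 1) (l.getD (j - 1) 0 - 1)).filter (fun x => x ≠ 0)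

def appP (l : List Nat) (a : Nat) : List Nat := if a = 0 then l else l ++ [a]

lemma odf_zero : odf 0 = 1 := by simp [odf]

lemma odf_succ (k : ℕ) : odf (k + 1) = (2 * (k : ℤ) + 1) * odf k := by
  unfold odf
  rw [Finset.prod_Icc_succ_top (by omega)]
  push_cast
  ring

lemma subHat_append (k : ℕ) (l₁ l₂ : List ℕ) :
    subHat k (l₁ ++ l₂) = subHat k l₁ ++ subHat k l₂ := by
  simp [subHat, List.filter_append]

lemma subHat_zero (l : List ℕ) (h : ∀ x ∈ l, 0 < x) : subHat 0 l = l := by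
  induction l with
  | nil => rfl
  | cons a t ih =>
    have ha : a ≠ 0 := by have := h a (by simp); omega
    simp only [subHat, List.map_cons, List.filter_cons] at *
    simp only [Nat.sub_zero] at *
    rw [if_pos (by simpa)]
    simp only [List.cons.injEq, true_and]
    exact ih (fun x hx => h x (by simp [hx]))

lemma subHat_single (k a : ℕ) : subHat k [a] = if a - k = 0 then [] else [a - k] := by
  by_cases h : a - k = 0 <;> simp [subHat, h]

lemma subHat_subHat (j k : ℕ) (l : List ℕ) : subHat j (subHat k l) = subHat (k + j) l := by
  induction l with
  | nil => rfl
  | cons a t ih =>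
    simp only [subHat, List.map_cons, List.filter_cons] at *
    by_cases h1 : a - k = 0
    · have h2 : a - (k + j) = 0 := by omega
      simp only [h1, h2]
      simpa using ih
    · by_cases h2 : a - k - j = 0
      · have h3 : a - (k + j) = 0 := by omega
        simp only [h3]
        rw [if_pos (by simpa)]
        simp only [List.map_cons, List.filter_cons, h2]
        rw [if_neg (by simpa)]
        simpa using ih
      · have h3 : a - (k + j) ≠ 0 := by omega
        rw [if_pos (by simpa using h1)]
        simp only [List.map_cons, List.filter_cons]
        rw [if_pos (by simpa using h2), if_pos (by simpa using h3)]
        have h4 : a - k - j = a - (k + j) := by omega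
        rw [h4]
        simpa using ih

lemma subHat_of_all_gt (k : ℕ) (l : List ℕ) (h : ∀ x ∈ l, k < x) :
    subHat k l = l.map (fun x => x - k) := by
  unfold subHat
  rw [List.filter_eq_self]
  intro a ha
  simp only [List.mem_map] at ha
  obtain ⟨x, hx, rfl⟩ := ha
  have := h x hx
  simp
  omega

lemma subHat_partition (k : ℕ) (l : List ℕ) (h : IsPartition l) : IsPartition (subHat k l) := by
  obtain ⟨h1, h2⟩ := h
  constructor
  · rw [List.Chain', List.isChain_iff_pairwise] at h1 ⊢
    refine (List.Pairwise.map (R := (· ≥ ·)) (S := (· ≥ ·)) _ ?_ h1).filter _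
    intro a b hab
    omega
  · intro x hx
    unfold subHat at hx
    have := List.of_mem_filter hx
    simp at this
    omega

lemma subHat_mem (k : ℕ) (l : List ℕ) (x : ℕ) (hx : x ∈ subHat k l) :
    ∃ y ∈ l, x = y - k := by
  unfold subHat at hx
  have := List.mem_of_mem_filter hx
  simp only [List.mem_map] at this
  obtain ⟨y, hy, rfl⟩ := this
  exact ⟨y, hy, rfl⟩

lemma subHat_sum_le (k : ℕ) (l : List ℕ) : (subHat k l).sum ≤ l.sum := by
  induction l with
  | nil => simp [subHat]
  | cons a t ih =>
    simp only [subHat, List.map_cons, List.filter_cons] at *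
    by_cases h : a - k = 0
    · rw [if_neg (by simpa)]
      simp only [List.sum_cons]
      omega
    · rw [if_pos (by simpa)]
      simp only [List.sum_cons]
      omega

section







-- partition access lemmas
lemma part_pairwise (l : List ℕ) (h : IsPartition l) : l.Pairwise (· ≥ ·) :=
  List.isChain_iff_pairwise.mp h.1

lemma part_mono (l : List ℕ) (h : IsPartition l) (a b : ℕ) (hab : a ≤ b) (hb : b < l.length) :
    l[b] ≤ l[a]'(by omega) := by
  rcases eq_or_lt_of_le hab with rfl | h2
  · exact le_refl _
  · exact List.pairwise_iff_getElem.mp (part_pairwise l h) a b (by omega) hb h2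

lemma part_append (l : List ℕ) (a : ℕ) (h : IsPartition (l ++ [a])) :
    IsPartition l ∧ 0 < a ∧ ∀ x ∈ l, a ≤ x := by
  have hp := part_pairwise _ h
  rw [List.pairwise_append] at hp
  refine ⟨⟨List.isChain_iff_pairwise.mpr hp.1, fun x hx => h.2 x (by simp [hx])⟩,
    h.2 a (by simp), fun x hx => hp.2.2 x hx a (by simp)⟩

lemma part_append_mk (l : List ℕ) (a : ℕ) (h : IsPartition l) (ha : 0 < a)
    (hge : ∀ x ∈ l, a ≤ x) : IsPartition (l ++ [a]) := by
  constructor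
  · rw [List.Chain', List.isChain_iff_pairwise, List.pairwise_append]
    refine ⟨part_pairwise l h, by simp, fun x hx b hb => ?_⟩
    simp at hb
    subst hb
    exact hge x hx
  · intro x hx
    rw [List.mem_append] at hx
    rcases hx with hx | hx
    · exact h.2 x hx
    · simp at hx; omega

lemma upAt_partition (l : List ℕ) (p : ℕ) (hp1 : 1 ≤ p) (hp : p < l.length)
    (h : IsPartition l) (hlt : l[p] < l[p-1]'(by omega)) :
    IsPartition (l.set p (l[p] + 1)) := by
  constructor
  · rw [List.Chain', List.isChain_iff_pairwise, List.pairwise_iff_getElem]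
    intro a b ha hb hab
    rw [List.length_set] at ha hb
    have hmono := part_mono l h
    by_cases hbp : p = b
    · subst hbp
      rw [List.getElem_set_ne (by omega), List.getElem_set_self]
      have h1 : l[p-1]'(by omega) ≤ l[a] := hmono a (p-1) (by omega) (by omega)
      omega
    · rw [List.getElem_set_ne hbp]
      by_cases hap : p = a
      · subst hap
        rw [List.getElem_set_self]
        have h1 : l[b] ≤ l[p] := hmono p b (by omega) (by omega)
        omega
      · rw [List.getElem_set_ne hap]
        exact hmono a b (by omega) hb
  · intro x hx
    rcases List.mem_or_eq_of_mem_set hx with hx | rfl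
    · exact h.2 x hx
    · omega

lemma upAt_partition' (l : List ℕ) (p : ℕ) (hp1 : 1 ≤ p) (hp : p < l.length)
    (h : IsPartition l) (hlt : l.getD p 0 < l.getD (p - 1) 0) :
    IsPartition (l.set p (l.getD p 0 + 1)) := by
  have h1 : l.getD p 0 = l[p] := List.getD_eq_getElem l 0 hp
  have h2 : l.getD (p - 1) 0 = l[p - 1]'(by omega) := List.getD_eq_getElem l 0 (by omega)
  rw [h1]
  exact upAt_partition l p hp1 hp h (by rw [h1, h2] at hlt; exact hlt)

-- sum helpers
lemma sum_range_split (F : ℕ → ℤ) (a : ℕ) :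
    ∑ k ∈ Finset.range (a + 1), F k = F 0 + ∑ k ∈ Finset.Icc 1 a, F k := by
  induction a with
  | zero => simp
  | succ n ih =>
    rw [Finset.sum_range_succ, ih, Finset.sum_Icc_succ_top (by omega)]
    ring

lemma pascal_sum (x : ℕ → ℤ) (q : ℕ) :
    ∑ k ∈ Finset.range (q + 1 + 1), ((q + 1).choose k : ℤ) * x k
      = ∑ k ∈ Finset.range (q + 1), (q.choose k : ℤ) * (x k + x (k + 1)) := by
  rw [Finset.sum_range_succ' (fun k => ((q + 1).choose k : ℤ) * x k) (q + 1)]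
  have h1 : ∀ k ∈ Finset.range (q + 1),
      ((q + 1).choose (k + 1) : ℤ) * x (k + 1)
        = (q.choose k : ℤ) * x (k + 1) + (q.choose (k + 1) : ℤ) * x (k + 1) := by
    intro k _
    have := Nat.choose_succ_succ q k
    push_cast [this]
    ring
  rw [Finset.sum_congr rfl h1, Finset.sum_add_distrib]
  have h2 : ∑ k ∈ Finset.range (q + 1), (q.choose (k + 1) : ℤ) * x (k + 1)
      + ((q + 1).choose 0 : ℤ) * x 0
      = ∑ k ∈ Finset.range (q + 1), (q.choose k : ℤ) * x k := by
    have h3 : ∑ k ∈ Finset.range (q + 1 + 1), (q.choose k : ℤ) * x k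
        = ∑ k ∈ Finset.range (q + 1), (q.choose (k + 1) : ℤ) * x (k + 1)
          + (q.choose 0 : ℤ) * x 0 :=
      Finset.sum_range_succ' (fun k => (q.choose k : ℤ) * x k) (q + 1)
    rw [Finset.sum_range_succ] at h3
    rw [Nat.choose_eq_zero_of_lt (by omega : q < q + 1)] at h3
    simp only [Nat.cast_zero, zero_mul, add_zero] at h3
    simp only [Nat.choose_zero_right, Nat.cast_one] at h3 ⊢
    linarith [h3]
  rw [add_assoc, h2, ← Finset.sum_add_distrib]
  exact Finset.sum_congr rfl (fun k _ => by ring)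

-- binomial identity
lemma choose_nat_id (m k : ℕ) (hm : 1 ≤ m) (hk : k ≤ m) :
    m * (m - 1).choose k = (m - k) * m.choose k := by
  have h1 := Nat.add_one_mul_choose_eq (m - 1) k
  have hs : m - 1 + 1 = m := by omega
  rw [hs] at h1
  have h1' : m * (m - 1).choose k = m.choose (k + 1) * (k + 1) := by
    simpa [hs] using h1
  rw [h1', Nat.choose_succ_right_eq m k, Nat.mul_comm]

lemma choose_int_id (m k : ℕ) (hm : 1 ≤ m) :
    (2 * (m : ℤ) + 1) * (m.choose k : ℤ)
      = 2 * (m : ℤ) * ((m - 1).choose k : ℤ) + (2 * (k : ℤ) + 1) * (m.choose k : ℤ) := by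
  rcases le_or_gt k m with h | h
  · have h1 := choose_nat_id m k hm h
    have h2 : (m : ℤ) * ((m - 1).choose k : ℤ) = ((m : ℤ) - (k : ℤ)) * (m.choose k : ℤ) := by
      have := congrArg (Nat.cast : ℕ → ℤ) h1
      push_cast [Nat.cast_sub h] at this
      linarith
    linarith
  · rw [Nat.choose_eq_zero_of_lt h, Nat.choose_eq_zero_of_lt (by omega : m - 1 < k)]
    simp

end
section MainProof

variable (f : List Nat → Int)
variable (hfr : ∀ l : List Nat, IsPartition l → 2 ≤ l.length →
      f l = f l.dropLast + ∑ k ∈ Finset.Icc 1 (l.getLastD 0),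
        ((l.getLastD 0).choose k : Int) * odf k * f (subHat k l.dropLast))

include hfr

lemma expand (ν : List ℕ) (a : ℕ) (hν : IsPartition ν) (hge : ∀ x ∈ ν, a ≤ x)
    (hne : a ≠ 0 → ν ≠ []) :
    f (appP ν a) = ∑ k ∈ Finset.range (a + 1),
      ((a.choose k : ℤ)) * (odf k * f (subHat k ν)) := by
  by_cases ha : a = 0
  · subst ha
    simp [appP, subHat_zero ν hν.2, odf_zero]
  · have hν' : ν ≠ [] := hne ha
    have hlen : 1 ≤ ν.length := List.length_pos_iff.mpr hν'
    have hpart : IsPartition (ν ++ [a]) := part_append_mk ν a hν (by omega) hge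
    have h2 : 2 ≤ (ν ++ [a]).length := by simp; omega
    have hrec := hfr (ν ++ [a]) hpart h2
    rw [List.dropLast_concat, List.getLastD_concat] at hrec
    rw [show appP ν a = ν ++ [a] by simp [appP, ha], hrec,
      sum_range_split (fun k => ((a.choose k : ℤ)) * (odf k * f (subHat k ν))) a]
    rw [subHat_zero ν hν.2]
    simp only [Nat.choose_zero_right, Nat.cast_one, odf_zero, one_mul]
    congr 1
    exact Finset.sum_congr rfl (fun k _ => by ring)

lemma main_aux : ∀ (n : ℕ) (μ : List ℕ) (i : ℕ), μ.sum ≤ n → IsPartition μ →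
    2 ≤ μ.length → 2 ≤ i → i ≤ μ.length → μ.getD (i - 1) 0 < μ.getD (i - 2) 0 →
    f (upAt i μ) - f μ
      = (2 * (μ.getD (i - 1) 0 : ℤ) + (μ.length : ℤ) - (i : ℤ) + 1) * f (subHat 1 (upAt i μ))
        - (2 * (μ.getD (i - 1) 0 : ℤ) + (μ.length : ℤ) - (i : ℤ)) * f (subHat 1 μ) := by
  intro n
  induction n with
  | zero =>
    intro μ i hsum hp hlen _ _ _
    exfalso
    rcases μ with _ | ⟨a, t⟩
    · simp at hlen
    · have ha : 0 < a := hp.2 a (by simp)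
      simp only [List.sum_cons] at hsum
      omega
  | succ n ih =>
    intro μ i hsum hp hlen hi2 his hlt
    obtain ⟨lam, r0, rfl⟩ : ∃ lam r0, μ = lam ++ [r0] := by
      rcases List.eq_nil_or_concat μ with h | ⟨L, b, h⟩
      · subst h; simp at hlen
      · exact ⟨L, b, by simpa using h⟩
    obtain ⟨hplam, hrpos, hger⟩ := part_append lam r0 hp
    obtain ⟨q, rfl⟩ : ∃ q, r0 = q + 1 := ⟨r0 - 1, by omega⟩
    have hlenlam : 1 ≤ lam.length := by
      simp only [List.length_append, List.length_cons, List.length_nil] at hlen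
      omega
    have hslen : (lam ++ [q + 1]).length = lam.length + 1 := by simp
    have hsum' : lam.sum + (q + 1) ≤ n + 1 := by
      have hss : (lam ++ [q + 1]).sum = lam.sum + (q + 1) := by simp
      omega
    rcases eq_or_lt_of_le his with hie | hie
    · -- base case : i = length
      have hi1 : i - 1 = lam.length := by omega
      have hm : (lam ++ [q + 1]).getD (i - 1) 0 = q + 1 := by
        rw [hi1, List.getD_append_right lam [q + 1] 0 lam.length (le_refl _)]
        simp
      have hi2' : i - 2 = lam.length - 1 := by omega
      have hltr : q + 1 < lam.getD (lam.length - 1) 0 := by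
        have h1 := hlt
        rw [hm, hi2', List.getD_append lam [q + 1] 0 _ (by omega)] at h1
        exact h1
      have hgtr : ∀ x ∈ lam, q + 1 < x := by
        intro x hx
        obtain ⟨j, hj, rfl⟩ := List.mem_iff_getElem.mp hx
        have h1 : lam[lam.length - 1]'(by omega) ≤ lam[j] :=
          part_mono lam hplam j (lam.length - 1) (by omega) (by omega)
        have h2 : lam.getD (lam.length - 1) 0 = lam[lam.length - 1]'(by omega) :=
          List.getD_eq_getElem lam 0 (by omega)
        omega
      set σ := subHat 1 lam with hσdef
      have hmapσ : σ = lam.map (fun x => x - 1) :=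
        subHat_of_all_gt 1 lam (fun x hx => by have := hgtr x hx; omega)
      have hσpart : IsPartition σ := subHat_partition 1 lam hplam
      have hσlen : σ.length = lam.length := by rw [hmapσ, List.length_map]
      have hσne : σ ≠ [] := List.length_pos_iff.mp (by omega)
      have hσge : ∀ x ∈ σ, q + 1 ≤ x := by
        intro x hx
        obtain ⟨y, hy, rfl⟩ := subHat_mem 1 lam x hx
        have := hgtr y hy
        omega
      have hup : upAt i (lam ++ [q + 1]) = lam ++ [q + 1 + 1] := by
        unfold upAt
        rw [hm, hi1, List.set_append, if_neg (by omega)]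
        simp
      have e1 : f (lam ++ [q + 1]) = ∑ k ∈ Finset.range (q + 1 + 1),
          (((q + 1).choose k : ℤ)) * (odf k * f (subHat k lam)) := by
        have h1 := expand f hfr lam (q + 1) hplam (fun x hx => le_of_lt (hgtr x hx))
          (fun _ => List.length_pos_iff.mp (by omega))
        rwa [show appP lam (q + 1) = lam ++ [q + 1] by simp [appP]] at h1
      have e2 : f (lam ++ [q + 1 + 1]) = ∑ k ∈ Finset.range (q + 1 + 1 + 1),
          (((q + 1 + 1).choose k : ℤ)) * (odf k * f (subHat k lam)) := by
        have h1 := expand f hfr lam (q + 1 + 1) hplam (fun x hx => hgtr x hx)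
          (fun _ => List.length_pos_iff.mp (by omega))
        rwa [show appP lam (q + 1 + 1) = lam ++ [q + 1 + 1] by simp [appP]] at h1
      have e4 : f (subHat 1 (lam ++ [q + 1 + 1])) = ∑ k ∈ Finset.range (q + 1 + 1),
          (((q + 1).choose k : ℤ)) * (odf k * f (subHat (k + 1) lam)) := by
        rw [subHat_append, subHat_single 1 (q + 1 + 1),
          if_neg (by omega : ¬ (q + 1 + 1 - 1 = 0))]
        have hra : σ ++ [q + 1 + 1 - 1] = appP σ (q + 1) := by
          simp [appP]
        rw [hra, expand f hfr σ (q + 1) hσpart hσge (fun _ => hσne)]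
        exact Finset.sum_congr rfl (fun k _ => by
          rw [hσdef, subHat_subHat, Nat.add_comm 1 k])
      have e3 : f (subHat 1 (lam ++ [q + 1])) = ∑ k ∈ Finset.range (q + 1),
          ((q.choose k : ℤ)) * (odf k * f (subHat (k + 1) lam)) := by
        rw [subHat_append, subHat_single 1 (q + 1)]
        have hra : σ ++ (if q + 1 - 1 = 0 then [] else [q + 1 - 1]) = appP σ q := by
          by_cases h : q = 0 <;> simp [appP, h]
        rw [hra, expand f hfr σ q hσpart
          (fun x hx => by have := hσge x hx; omega) (fun _ => hσne)]
        exact Finset.sum_congr rfl (fun k _ => by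
          rw [hσdef, subHat_subHat, Nat.add_comm 1 k])
      have e3x : ∑ k ∈ Finset.range (q + 1 + 1),
            ((q.choose k : ℤ)) * (odf k * f (subHat (k + 1) lam))
          = ∑ k ∈ Finset.range (q + 1),
            ((q.choose k : ℤ)) * (odf k * f (subHat (k + 1) lam)) := by
        rw [Finset.sum_range_succ, Nat.choose_eq_zero_of_lt (by omega : q < q + 1)]
        simp
      rw [hup, hm, e2, e1, e3, e4, ← e3x]
      rw [pascal_sum (fun k => odf k * f (subHat k lam)) (q + 1)]
      rw [← Finset.sum_sub_distrib, Finset.mul_sum, Finset.mul_sum,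
        ← Finset.sum_sub_distrib]
      apply Finset.sum_congr rfl
      intro k _
      have hc := choose_int_id (q + 1) k (by omega)
      simp only [Nat.add_sub_cancel] at hc
      have hcast : ((lam ++ [q + 1]).length : ℤ) - (i : ℤ) = 0 := by
        rw [hie]
        exact sub_self _
      simp only [odf_succ]
      linear_combination (-(odf k * f (subHat (k + 1) lam))) * hc
        - ((((q + 1).choose k : ℤ)) - ((q.choose k : ℤ)))
          * (odf k * f (subHat (k + 1) lam)) * hcast
    · -- step case : i < length
      have hilam : i ≤ lam.length := by omega
      have hlenlam2 : 2 ≤ lam.length := by omega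
      have hp1 : 1 ≤ i - 1 := by omega
      have hplt : i - 1 < lam.length := by omega
      have hgetD1 : (lam ++ [q + 1]).getD (i - 1) 0 = lam.getD (i - 1) 0 :=
        List.getD_append lam [q + 1] 0 _ (by omega)
      have hgetD2 : (lam ++ [q + 1]).getD (i - 2) 0 = lam.getD (i - 2) 0 :=
        List.getD_append lam [q + 1] 0 _ (by omega)
      set m := lam.getD (i - 1) 0 with hmdef
      have hgetelem : lam[i - 1]'hplt = m := (List.getD_eq_getElem lam 0 hplt).symm
      have hlt' : m < lam.getD (i - 2) 0 := by
        rw [hgetD1, hgetD2] at hlt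
        exact hlt
      have hrm : q + 1 ≤ m := by
        have := hger (lam[i - 1]'hplt) (List.getElem_mem hplt)
        omega
      set lamu := upAt i lam with hlamudef
      have hlamu_eq : lamu = lam.set (i - 1) (m + 1) := rfl
      have hup : upAt i (lam ++ [q + 1]) = lamu ++ [q + 1] := by
        rw [hlamudef]
        unfold upAt
        rw [hgetD1, List.set_append, if_pos (by omega)]
      have hlamupart : IsPartition lamu := by
        rw [hlamu_eq, hmdef]
        exact upAt_partition' lam (i - 1) hp1 hplt hplam
          (by rw [show i - 1 - 1 = i - 2 by omega]; exact hlt')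
      have hlamuge : ∀ x ∈ lamu, q + 1 ≤ x := by
        intro x hx
        rw [hlamu_eq] at hx
        rcases List.mem_or_eq_of_mem_set hx with hx | rfl
        · exact hger x hx
        · omega
      have hlamulen : lamu.length = lam.length := by
        rw [hlamu_eq, List.length_set]
      set σ := subHat 1 lam with hσdef
      set σ' := subHat 1 lamu with hσ'def
      have hσpart : IsPartition σ := subHat_partition 1 lam hplam
      have hσ'part : IsPartition σ' := subHat_partition 1 lamu hlamupart
      have hσge : ∀ x ∈ σ, q ≤ x := by
        intro x hx
        obtain ⟨y, hy, rfl⟩ := subHat_mem 1 lam x hx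
        have := hger y hy
        omega
      have hσ'ge : ∀ x ∈ σ', q ≤ x := by
        intro x hx
        obtain ⟨y, hy, rfl⟩ := subHat_mem 1 lamu x hx
        have := hlamuge y hy
        omega
      have hσne : q ≠ 0 → σ ≠ [] := by
        intro hq
        have hgt1 : ∀ x ∈ lam, 1 < x := fun x hx => by have := hger x hx; omega
        rw [hσdef, subHat_of_all_gt 1 lam hgt1]
        simp only [ne_eq, List.map_eq_nil_iff]
        exact List.length_pos_iff.mp (by omega)
      have hσ'ne : q ≠ 0 → σ' ≠ [] := by
        intro hq
        have hgt1 : ∀ x ∈ lamu, 1 < x := fun x hx => by have := hlamuge x hx; omega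
        rw [hσ'def, subHat_of_all_gt 1 lamu hgt1]
        simp only [ne_eq, List.map_eq_nil_iff]
        exact List.length_pos_iff.mp (by rw [hlamulen]; omega)
      have e1 : f (lam ++ [q + 1]) = ∑ k ∈ Finset.range (q + 1 + 1),
          (((q + 1).choose k : ℤ)) * (odf k * f (subHat k lam)) := by
        have h1 := expand f hfr lam (q + 1) hplam (fun x hx => hger x hx)
          (fun _ => List.length_pos_iff.mp (by omega))
        rwa [show appP lam (q + 1) = lam ++ [q + 1] by simp [appP]] at h1
      have e2 : f (lamu ++ [q + 1]) = ∑ k ∈ Finset.range (q + 1 + 1),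
          (((q + 1).choose k : ℤ)) * (odf k * f (subHat k lamu)) := by
        have h1 := expand f hfr lamu (q + 1) hlamupart hlamuge
          (fun _ => List.length_pos_iff.mp (by rw [hlamulen]; omega))
        rwa [show appP lamu (q + 1) = lamu ++ [q + 1] by simp [appP]] at h1
      have e3 : f (subHat 1 (lam ++ [q + 1])) = ∑ k ∈ Finset.range (q + 1),
          ((q.choose k : ℤ)) * (odf k * f (subHat (k + 1) lam)) := by
        rw [subHat_append, subHat_single 1 (q + 1)]
        have hra : σ ++ (if q + 1 - 1 = 0 then [] else [q + 1 - 1]) = appP σ q := by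
          by_cases h : q = 0 <;> simp [appP, h]
        rw [hra, expand f hfr σ q hσpart hσge hσne]
        exact Finset.sum_congr rfl (fun k _ => by
          rw [hσdef, subHat_subHat, Nat.add_comm 1 k])
      have e4 : f (subHat 1 (lamu ++ [q + 1])) = ∑ k ∈ Finset.range (q + 1),
          ((q.choose k : ℤ)) * (odf k * f (subHat (k + 1) lamu)) := by
        rw [subHat_append, subHat_single 1 (q + 1)]
        have hra : σ' ++ (if q + 1 - 1 = 0 then [] else [q + 1 - 1]) = appP σ' q := by
          by_cases h : q = 0 <;> simp [appP, h]
        rw [hra, expand f hfr σ' q hσ'part hσ'ge hσ'ne]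
        exact Finset.sum_congr rfl (fun k _ => by
          rw [hσ'def, subHat_subHat, Nat.add_comm 1 k])
      have tw : ∀ k ∈ Finset.range (q + 1),
          f (subHat k lamu) - f (subHat k lam)
            = (2 * ((m : ℤ) - (k : ℤ)) + (lam.length : ℤ) - (i : ℤ) + 1)
                * f (subHat (k + 1) lamu)
              - (2 * ((m : ℤ) - (k : ℤ)) + (lam.length : ℤ) - (i : ℤ))
                * f (subHat (k + 1) lam) := by
        intro k hk
        rw [Finset.mem_range] at hk
        have hklam : ∀ x ∈ lam, k < x := fun x hx => by have := hger x hx; omega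
        have hklamu : ∀ x ∈ lamu, k < x := fun x hx => by have := hlamuge x hx; omega
        have hmap : subHat k lam = lam.map (fun x => x - k) :=
          subHat_of_all_gt k lam hklam
        have hmap' : subHat k lamu = lamu.map (fun x => x - k) :=
          subHat_of_all_gt k lamu hklamu
        have hsublen : (subHat k lam).length = lam.length := by
          rw [hmap, List.length_map]
        have hcomm : upAt i (subHat k lam) = subHat k lamu := by
          rw [hmap, hmap', hlamu_eq, List.map_set]
          unfold upAt
          have hgd : (lam.map (fun x => x - k)).getD (i - 1) 0 = m - k := by
            rw [List.getD_eq_getElem _ 0 (by rw [List.length_map]; omega),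
              List.getElem_map, hgetelem]
          rw [hgd, show m - k + 1 = m + 1 - k by omega]
        have hgd1 : (subHat k lam).getD (i - 1) 0 = m - k := by
          rw [hmap, List.getD_eq_getElem _ 0 (by rw [List.length_map]; omega),
            List.getElem_map, hgetelem]
        have hgd2 : (subHat k lam).getD (i - 2) 0 = lam.getD (i - 2) 0 - k := by
          rw [hmap, List.getD_eq_getElem _ 0 (by rw [List.length_map]; omega),
            List.getElem_map, List.getD_eq_getElem lam 0 (by omega)]
        have hsum2 : (subHat k lam).sum ≤ n := by
          have h1 := subHat_sum_le k lam
          omega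
        have hihyp := ih (subHat k lam) i hsum2 (subHat_partition k lam hplam)
          (by omega) hi2 (by omega) (by rw [hgd1, hgd2]; omega)
        rw [hcomm, hgd1, hsublen, subHat_subHat 1 k lamu, subHat_subHat 1 k lam]
          at hihyp
        rw [show ((m - k : ℕ) : ℤ) = (m : ℤ) - (k : ℤ) by rw [Nat.cast_sub (by omega)]]
          at hihyp
        exact hihyp
      rw [hup, hgetD1, e2, e1, e3, e4]
      rw [pascal_sum (fun k => odf k * f (subHat k lamu)) q,
        pascal_sum (fun k => odf k * f (subHat k lam)) q]
      rw [show ((lam ++ [q + 1]).length : ℤ) = (lam.length : ℤ) + 1 by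
        rw [hslen]; push_cast; ring]
      rw [← Finset.sum_sub_distrib, Finset.mul_sum, Finset.mul_sum,
        ← Finset.sum_sub_distrib]
      apply Finset.sum_congr rfl
      intro k hk
      have htw := tw k hk
      simp only [odf_succ]
      linear_combination ((q.choose k : ℤ) * odf k) * htw

end MainProof

theorem stmt5
    (d : Nat → Int) (hd0 : d 0 = 1) (hd1 : d 1 = 0)
    (hd : ∀ n : Nat, 2 ≤ n → d n = 2 * ((n : Int) - 1) * (d (n - 1) + d (n - 2)))
    (f : List Nat → Int) (hf0 : f [] = 1) (hf1 : ∀ m : Nat, f [m] = d m)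
    (hfr : ∀ l : List Nat, IsPartition l → 2 ≤ l.length →
      f l = f l.dropLast + ∑ k ∈ Finset.Icc 1 (l.getLastD 0),
        ((l.getLastD 0).choose k : Int) * odf k * f (subHat k l.dropLast))
    (μ : List Nat) (hμ : IsPartition μ) (hs : 2 ≤ μ.length)
    (i : Nat) (hi2 : 2 ≤ i) (his : i ≤ μ.length)
    (hlt : μ.getD (i - 1) 0 < μ.getD (i - 2) 0) :
    f (upAt i μ) - f μ
      = (2 * (μ.getD (i - 1) 0 : Int) + (μ.length : Int) - (i : Int) + 1) * f (subHat 1 (upAt i μ))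
        - (2 * (μ.getD (i - 1) 0 : Int) + (μ.length : Int) - (i : Int)) * f (subHat 1 μ) := by
  exact main_aux f hfr μ.sum μ i (le_refl _) hμ hs hi2 his hlt
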